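/- Let V be a real separable Hilbert space, ω : [0,T] → V continuously differentiable with derivative ω', E : W → L(V,W) a continuous bilinear map (i.e. E ∈ L(W, L(V,W))), and x ∈ W. Define a_{ts}(E,x) := ∫_s^t S(t−r)( (E(S(r−s)x))(ω'(r)) ) dr (Bochner integral) for (t,s) ∈ Δ_T. Then for all 0 ≤ s ≤ τ ≤ t ≤ T one has (δ̂₂a)_{tτs}(E,x) := a_{ts}(E,x) − a_{tτ}(E,x) − S(t−τ)(a_{τs}(E,x)) = a_{tτ}(E, S(τ−s)x − x). -/

import Mathlib

open Set intervalIntegral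

lemma semigroup_bound' {W : Type*} [NormedAddCommGroup W] [NormedSpace ℝ W] [CompleteSpace W]
    (S : ℝ → W →L[ℝ] W) (hScont : ∀ x : W, Continuous fun t => S t x) (A : ℝ) :
    ∃ M : ℝ, ∀ u ∈ Set.Icc (0:ℝ) A, ‖S u‖ ≤ M := by
  obtain ⟨M, hM⟩ := banach_steinhaus (ι := Set.Icc (0:ℝ) A) (g := fun u => S u.1)
    (fun x => by
      obtain ⟨C, hC⟩ := (isCompact_Icc (a := (0:ℝ)) (b := A)).exists_bound_of_continuousOn
        ((hScont x).continuousOn)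
      exact ⟨C, fun i => hC i i.2⟩)
  exact ⟨M, fun u hu => hM ⟨u, hu⟩⟩

lemma semigroup_apply_continuousOn' {W : Type*} [NormedAddCommGroup W] [NormedSpace ℝ W]
    [CompleteSpace W]
    (S : ℝ → W →L[ℝ] W) (hScont : ∀ x : W, Continuous fun t => S t x)
    {K : Set ℝ} (A : ℝ) (g : ℝ → W) (hg : ContinuousOn g K)
    (h : ℝ → ℝ) (hh : Continuous h) (hrange : ∀ r ∈ K, h r ∈ Set.Icc (0:ℝ) A) :
    ContinuousOn (fun r => S (h r) (g r)) K := by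
  obtain ⟨M, hM⟩ := semigroup_bound' S hScont A
  intro r₀ hr₀
  have h2 : ContinuousWithinAt (fun r => S (h r) (g r₀)) K r₀ :=
    ((hScont (g r₀)).comp hh).continuousWithinAt
  have h1 : Filter.Tendsto (fun r => S (h r) (g r - g r₀)) (nhdsWithin r₀ K) (nhds 0) := by
    have hgn : Filter.Tendsto (fun r => M * ‖g r - g r₀‖) (nhdsWithin r₀ K) (nhds 0) := by
      have h0 : Filter.Tendsto (fun r => g r - g r₀) (nhdsWithin r₀ K) (nhds 0) := by
        have := (hg r₀ hr₀).sub (continuousWithinAt_const (b := g r₀))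
        simp only [ContinuousWithinAt, Pi.sub_apply, sub_self] at this
        exact this
      simpa using h0.norm.const_mul M
    refine squeeze_zero_norm' ?_ hgn
    filter_upwards [self_mem_nhdsWithin] with r hr
    calc ‖S (h r) (g r - g r₀)‖ ≤ ‖S (h r)‖ * ‖g r - g r₀‖ := (S (h r)).le_opNorm _
      _ ≤ M * ‖g r - g r₀‖ :=
        mul_le_mul_of_nonneg_right (hM _ (hrange r hr)) (norm_nonneg _)
  have hsum : ContinuousWithinAt (fun r => S (h r) (g r - g r₀) + S (h r) (g r₀)) K r₀ := by
    have := h1.add h2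
    unfold ContinuousWithinAt
    simpa using this
  refine hsum.congr (fun r _ => ?_) ?_ <;> simp [map_sub]

/-- Algebraic relation `(δ̂₂a)_{tτs}(E,x) = a_{tτ}(E, S(τ−s)x − x)`
for the supporting process `a` of a smooth path. -/
theorem a_process_algebraic_relation
    {W V : Type*} [NormedAddCommGroup W] [NormedSpace ℝ W] [CompleteSpace W]
    [NormedAddCommGroup V] [InnerProductSpace ℝ V] [CompleteSpace V]
    [TopologicalSpace.SeparableSpace V]
    (T : ℝ) (hT : 0 < T)
    (S : ℝ → W →L[ℝ] W)
    (hS0 : S 0 = ContinuousLinearMap.id ℝ W)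
    (hSadd : ∀ t s : ℝ, 0 ≤ t → 0 ≤ s → S (t + s) = (S t).comp (S s))
    (hScont : ∀ x : W, Continuous fun t => S t x)
    (ω ω' : ℝ → V)
    (hω : ∀ r ∈ Set.Icc (0 : ℝ) T, HasDerivWithinAt ω (ω' r) (Set.Icc 0 T) r)
    (hω' : ContinuousOn ω' (Set.Icc 0 T))
    (E : W →L[ℝ] V →L[ℝ] W) (x : W)
    (s τ t : ℝ) (hs : 0 ≤ s) (hsτ : s ≤ τ) (hτt : τ ≤ t) (htT : t ≤ T) :
    (∫ r in s..t, S (t - r) ((E (S (r - s) x)) (ω' r))) -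
      (∫ r in τ..t, S (t - r) ((E (S (r - τ) x)) (ω' r))) -
      S (t - τ) (∫ r in s..τ, S (τ - r) ((E (S (r - s) x)) (ω' r))) =
    ∫ r in τ..t, S (t - r) ((E (S (r - τ) (S (τ - s) x - x))) (ω' r)) := by
  have hst : s ≤ t := hsτ.trans hτt
  have hτ0 : 0 ≤ τ := hs.trans hsτ
  -- inner integrand continuity
  have hg : ∀ (y : W) (u v : ℝ), 0 ≤ u → v ≤ T →
      ContinuousOn (fun r => (E (S (r - u) y)) (ω' r)) (Set.Icc u v) := by
    intro y u v hu0 hvT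
    apply ContinuousOn.clm_apply
    · exact (E.continuous.comp ((hScont y).comp (continuous_sub_right u))).continuousOn
    · exact hω'.mono (Set.Icc_subset_Icc hu0 hvT)
  -- full integrand continuity
  have hcont : ∀ (y : W) (u v b : ℝ), 0 ≤ u → v ≤ b → b ≤ T →
      ContinuousOn (fun r => S (b - r) ((E (S (r - u) y)) (ω' r))) (Set.Icc u v) := by
    intro y u v b hu0 hvb hbT
    refine semigroup_apply_continuousOn' S hScont T _
      (hg y u v hu0 (hvb.trans hbT)) (fun r => b - r)
      (continuous_const.sub continuous_id) ?_
    intro r hr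
    obtain ⟨h₁, h₂⟩ := hr
    simp only [Set.mem_Icc]
    constructor <;> linarith
  -- integrability facts
  have I1 : IntervalIntegrable (fun r => S (t - r) ((E (S (r - s) x)) (ω' r)))
      MeasureTheory.volume s τ := by
    rw [intervalIntegrable_iff_integrableOn_Icc_of_le hsτ]
    exact (hcont x s τ t hs hτt htT).integrableOn_compact isCompact_Icc
  have I2 : IntervalIntegrable (fun r => S (t - r) ((E (S (r - s) x)) (ω' r)))
      MeasureTheory.volume τ t := by
    rw [intervalIntegrable_iff_integrableOn_Icc_of_le hτt]
    exact ((hcont x s t t hs le_rfl htT).mono (Set.Icc_subset_Icc hsτ le_rfl)).integrableOn_compact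
      isCompact_Icc
  have I3 : IntervalIntegrable (fun r => S (t - r) ((E (S (r - τ) x)) (ω' r)))
      MeasureTheory.volume τ t := by
    rw [intervalIntegrable_iff_integrableOn_Icc_of_le hτt]
    exact (hcont x τ t t hτ0 le_rfl htT).integrableOn_compact isCompact_Icc
  have Iτ : IntervalIntegrable (fun r => S (τ - r) ((E (S (r - s) x)) (ω' r)))
      MeasureTheory.volume s τ := by
    rw [intervalIntegrable_iff_integrableOn_Icc_of_le hsτ]
    exact (hcont x s τ τ hs le_rfl (hτt.trans htT)).integrableOn_compact isCompact_Icc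
  -- split the first integral
  have hsplit : (∫ r in s..t, S (t - r) ((E (S (r - s) x)) (ω' r))) =
      (∫ r in s..τ, S (t - r) ((E (S (r - s) x)) (ω' r))) +
      (∫ r in τ..t, S (t - r) ((E (S (r - s) x)) (ω' r))) :=
    (intervalIntegral.integral_add_adjacent_intervals I1 I2).symm
  -- move S (t - τ) inside the integral
  have hcomm : S (t - τ) (∫ r in s..τ, S (τ - r) ((E (S (r - s) x)) (ω' r))) =
      ∫ r in s..τ, S (t - r) ((E (S (r - s) x)) (ω' r)) := by
    rw [← (S (t - τ)).intervalIntegral_comp_comm Iτ]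
    apply intervalIntegral.integral_congr
    intro r hr
    rw [Set.uIcc_of_le hsτ] at hr
    have h1 : (0:ℝ) ≤ t - τ := by linarith
    have h2 : (0:ℝ) ≤ τ - r := by linarith [hr.2]
    have := hSadd (t - τ) (τ - r) h1 h2
    have heq : t - τ + (τ - r) = t - r := by ring
    rw [heq] at this
    simp [this]
  -- RHS integrand equals difference
  have hrhs : (∫ r in τ..t, S (t - r) ((E (S (r - τ) (S (τ - s) x - x))) (ω' r))) =
      (∫ r in τ..t, S (t - r) ((E (S (r - s) x)) (ω' r))) -
      (∫ r in τ..t, S (t - r) ((E (S (r - τ) x)) (ω' r))) := by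
    rw [← intervalIntegral.integral_sub I2 I3]
    apply intervalIntegral.integral_congr
    intro r hr
    rw [Set.uIcc_of_le hτt] at hr
    have h1 : (0:ℝ) ≤ r - τ := by linarith [hr.1]
    have h2 : (0:ℝ) ≤ τ - s := by linarith
    have hadd := hSadd (r - τ) (τ - s) h1 h2
    have heq : r - τ + (τ - s) = r - s := by ring
    rw [heq] at hadd
    have : S (r - τ) (S (τ - s) x - x) = S (r - s) x - S (r - τ) x := by
      rw [map_sub, hadd]; simp
    show S (t - r) ((E (S (r - τ) (S (τ - s) x - x))) (ω' r)) =
      S (t - r) ((E (S (r - s) x)) (ω' r)) - S (t - r) ((E (S (r - τ) x)) (ω' r))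
    rw [this, map_sub, ContinuousLinearMap.sub_apply, map_sub]
  rw [hsplit, hcomm, hrhs]
  abel
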